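/- Let B ≥ 1, L_b > 0 and θ_b ∈ ℝ for b ∈ Fin B, and let α ∈ (0, π). Define f̂ : ℝ → ℂ by f̂(u) = ∑_{b=1}^{B} (cos θ_b − cos(L_b e^{iα} u)) / sin(L_b e^{iα} u). Then (a) for every u > 0, f̂ has derivative f̂′(u) = e^{iα} ∑_{b=1}^{B} L_b (1 − cos θ_b · cos(u L_b e^{iα})) / sin²(u L_b e^{iα}) at u; and (b) there exists c > 0 such that f̂′(u) = O(e^{−cu}) as u → +∞. -/

import Mathlib

open scoped Topology

private lemma sin_ne_zero_of_im_ne_zero {z : ℂ} (hz : z.im ≠ 0) : Complex.sin z ≠ 0 := by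
  intro h
  rw [Complex.sin_eq_zero_iff] at h
  obtain ⟨k, hk⟩ := h
  apply hz
  rw [hk]
  simp

private lemma norm_cos_le_of_im (w : ℂ) :
    ‖Complex.cos w‖ ≤ (Real.exp w.im + Real.exp (-w.im)) / 2 := by
  rw [Complex.cos]
  have h1 : ‖Complex.exp (w * Complex.I)‖ = Real.exp (-w.im) := by
    rw [Complex.norm_exp]
    congr 1
    simp [Complex.mul_re]
  have h2 : ‖Complex.exp (-w * Complex.I)‖ = Real.exp w.im := by
    rw [Complex.norm_exp]
    congr 1
    simp [Complex.mul_re]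
  calc ‖(Complex.exp (w * Complex.I) + Complex.exp (-w * Complex.I)) / 2‖
      = ‖Complex.exp (w * Complex.I) + Complex.exp (-w * Complex.I)‖ / 2 := by
        rw [norm_div]; norm_num
    _ ≤ (‖Complex.exp (w * Complex.I)‖ + ‖Complex.exp (-w * Complex.I)‖) / 2 := by
        gcongr; exact norm_add_le _ _
    _ = (Real.exp (-w.im) + Real.exp w.im) / 2 := by rw [h1, h2]
    _ = (Real.exp w.im + Real.exp (-w.im)) / 2 := by ring

private lemma norm_sin_ge_of_im (w : ℂ) :
    (Real.exp w.im - Real.exp (-w.im)) / 2 ≤ ‖Complex.sin w‖ := by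
  rw [Complex.sin]
  have h1 : ‖Complex.exp (w * Complex.I)‖ = Real.exp (-w.im) := by
    rw [Complex.norm_exp]
    congr 1
    simp [Complex.mul_re]
  have h2 : ‖Complex.exp (-w * Complex.I)‖ = Real.exp w.im := by
    rw [Complex.norm_exp]
    congr 1
    simp [Complex.mul_re]
  have : ‖(Complex.exp (-w * Complex.I) - Complex.exp (w * Complex.I)) * Complex.I / 2‖
      = ‖Complex.exp (-w * Complex.I) - Complex.exp (w * Complex.I)‖ / 2 := by
    rw [norm_div, norm_mul]
    simp
  rw [this]
  have := norm_sub_norm_le (Complex.exp (-w * Complex.I)) (Complex.exp (w * Complex.I))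
  rw [h1, h2] at this
  linarith

/-- Derivative of a single summand, as a complex function. -/
private lemma term_hasDerivAt (z c w : ℂ) (hz : Complex.sin (z * w) ≠ 0) :
    HasDerivAt (fun w => (c - Complex.cos (z * w)) / Complex.sin (z * w))
      (z * (1 - c * Complex.cos (z * w)) / Complex.sin (z * w) ^ 2) w := by
  have hlin : HasDerivAt (fun w : ℂ => z * w) z w := by
    simpa using (hasDerivAt_id w).const_mul z
  have hcos : HasDerivAt (fun w : ℂ => Complex.cos (z * w)) (-Complex.sin (z * w) * z) w :=
    (Complex.hasDerivAt_cos (z * w)).comp w hlin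
  have hsin : HasDerivAt (fun w : ℂ => Complex.sin (z * w)) (Complex.cos (z * w) * z) w :=
    (Complex.hasDerivAt_sin (z * w)).comp w hlin
  have hnum : HasDerivAt (fun w : ℂ => c - Complex.cos (z * w)) (Complex.sin (z * w) * z) w := by
    simpa using hcos.const_sub c
  have hdiv := hnum.div hsin hz
  have hnumeq : Complex.sin (z * w) * z * Complex.sin (z * w) -
      (c - Complex.cos (z * w)) * (Complex.cos (z * w) * z)
      = z * (1 - c * Complex.cos (z * w)) := by
    linear_combination z * Complex.sin_sq_add_cos_sq (z * w)
  rw [← hnumeq]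
  exact hdiv

theorem dirac_rose_secular_derivative_and_decay
    (B : ℕ) (hB : 1 ≤ B) (L θ : Fin B → ℝ) (hL : ∀ b, 0 < L b)
    (α : ℝ) (hα : α ∈ Set.Ioo 0 Real.pi) :
    let f : ℝ → ℂ := fun u => ∑ b, ((Real.cos (θ b) : ℂ) -
        Complex.cos (L b * Complex.exp (Complex.I * α) * u)) /
      Complex.sin (L b * Complex.exp (Complex.I * α) * u)
    (∀ u : ℝ, 0 < u →
        HasDerivAt f
          (Complex.exp (Complex.I * α) * ∑ b, (L b : ℂ) *
            (1 - (Real.cos (θ b) : ℂ) *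
              Complex.cos (u * L b * Complex.exp (Complex.I * α))) /
            Complex.sin (u * L b * Complex.exp (Complex.I * α)) ^ 2) u) ∧
    ∃ c : ℝ, 0 < c ∧
      (deriv f) =O[Filter.atTop] fun u : ℝ => Real.exp (-c * u) := by
  intro f
  set E : ℂ := Complex.exp (Complex.I * α) with hE
  have hsinα : 0 < Real.sin α := Real.sin_pos_of_pos_of_lt_pi hα.1 hα.2
  have hEim : E.im = Real.sin α := by
    rw [hE, Complex.exp_im]
    simp [Complex.mul_re, Complex.mul_im]
  -- imaginary part of the argument
  have him : ∀ (b : Fin B) (u : ℝ), ((L b : ℂ) * E * u).im = L b * u * Real.sin α := by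
    intro b u
    have : (L b : ℂ) * E * u = ((L b * u : ℝ) : ℂ) * E := by push_cast; ring
    rw [this]
    simp [Complex.mul_im, hEim]
  have hsinne : ∀ (b : Fin B) (u : ℝ), 0 < u →
      Complex.sin ((L b : ℂ) * E * u) ≠ 0 := by
    intro b u hu
    apply sin_ne_zero_of_im_ne_zero
    rw [him]
    exact ne_of_gt (mul_pos (mul_pos (hL b) hu) hsinα)
  -- part (a)
  have parta : ∀ u : ℝ, 0 < u →
      HasDerivAt f
        (E * ∑ b, (L b : ℂ) * (1 - (Real.cos (θ b) : ℂ) *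
            Complex.cos (u * L b * E)) / Complex.sin (u * L b * E) ^ 2) u := by
    intro u hu
    have key : ∀ b : Fin B,
        HasDerivAt (fun v : ℝ => ((Real.cos (θ b) : ℂ) -
            Complex.cos ((L b : ℂ) * E * v)) / Complex.sin ((L b : ℂ) * E * v))
          ((L b : ℂ) * E * (1 - (Real.cos (θ b) : ℂ) * Complex.cos ((L b : ℂ) * E * u)) /
            Complex.sin ((L b : ℂ) * E * u) ^ 2) u := by
      intro b
      exact (term_hasDerivAt ((L b : ℂ) * E) (Real.cos (θ b)) (u : ℂ)
        (hsinne b u hu)).comp_ofReal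
    have hsum := HasDerivAt.sum (u := Finset.univ) (fun b _ => key b)
    convert hsum using 1
    · rfl
    · funext v
      simp only [f, Finset.sum_apply]
      rfl
    rw [Finset.mul_sum]
    apply Finset.sum_congr rfl
    intro b _
    have harg : ((u : ℂ) * (L b : ℂ) * E) = ((L b : ℂ) * E * u) := by ring
    rw [harg]
    ring
  refine ⟨parta, ?_⟩
  -- part (b)
  have hBne : (Finset.univ : Finset (Fin B)).Nonempty := by
    have : Nonempty (Fin B) := ⟨⟨0, hB⟩⟩
    exact Finset.univ_nonempty
  set m : ℝ := Finset.univ.inf' hBne L with hm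
  have hmpos : 0 < m := by
    rw [hm]
    exact (Finset.lt_inf'_iff hBne).mpr (fun b _ => hL b)
  have hmle : ∀ b : Fin B, m ≤ L b := fun b => Finset.inf'_le _ (Finset.mem_univ b)
  set c : ℝ := m * Real.sin α with hc
  have hcpos : 0 < c := mul_pos hmpos hsinα
  refine ⟨c, hcpos, ?_⟩
  rw [Asymptotics.isBigO_iff]
  refine ⟨∑ b, 32 * L b, ?_⟩
  filter_upwards [Filter.eventually_ge_atTop (max 1 (1 / c))] with u hu
  have hu1 : (1:ℝ) ≤ u := le_trans (le_max_left _ _) hu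
  have hu0 : 0 < u := lt_of_lt_of_le one_pos hu1
  have hcu : 1 ≤ c * u := by
    have h2 : 1 / c ≤ u := le_trans (le_max_right _ _) hu
    rw [div_le_iff₀ hcpos] at h2
    linarith
  -- rewrite deriv f
  rw [(parta u hu0).deriv]
  have hEnorm : ‖E‖ = 1 := by
    rw [hE, Complex.norm_exp]
    simp [Complex.mul_re]
  -- bound each term
  have hterm : ∀ b : Fin B,
      ‖(L b : ℂ) * (1 - (Real.cos (θ b) : ℂ) * Complex.cos ((u:ℂ) * L b * E)) /
        Complex.sin ((u:ℂ) * L b * E) ^ 2‖ ≤ 32 * L b * Real.exp (-c * u) := by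
    intro b
    set w : ℂ := (u:ℂ) * (L b : ℂ) * E with hw
    have hwim : w.im = L b * u * Real.sin α := by
      have : w = (L b : ℂ) * E * u := by rw [hw]; ring
      rw [this, him]
    set y : ℝ := L b * u * Real.sin α with hy
    have hy1 : 1 ≤ y := by
      calc (1:ℝ) ≤ c * u := hcu
        _ = m * Real.sin α * u := by rw [hc]
        _ ≤ L b * Real.sin α * u :=
            mul_le_mul_of_nonneg_right
              (mul_le_mul_of_nonneg_right (hmle b) hsinα.le) hu0.le
        _ = y := by rw [hy]; ring
    have hy0 : 0 < y := lt_of_lt_of_le one_pos hy1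
    -- cos bound
    have hcosb : ‖Complex.cos w‖ ≤ Real.exp y := by
      have h := norm_cos_le_of_im w
      rw [hwim] at h
      have : Real.exp (-y) ≤ Real.exp y := Real.exp_le_exp.mpr (by linarith)
      linarith
    -- numerator bound
    have hnum : ‖(1 : ℂ) - (Real.cos (θ b) : ℂ) * Complex.cos w‖ ≤ 2 * Real.exp y := by
      have h1 : ‖(1 : ℂ)‖ = 1 := norm_one
      have h2 : ‖(Real.cos (θ b) : ℂ) * Complex.cos w‖ ≤ Real.exp y := by
        rw [norm_mul]
        have hc1 : ‖((Real.cos (θ b) : ℝ) : ℂ)‖ ≤ 1 := by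
          rw [Complex.norm_real]
          exact abs_le.mpr ⟨by nlinarith [Real.neg_one_le_cos (θ b)], Real.cos_le_one _⟩
        calc ‖((Real.cos (θ b) : ℝ) : ℂ)‖ * ‖Complex.cos w‖ ≤ 1 * Real.exp y := by
              apply mul_le_mul hc1 hcosb (norm_nonneg _) zero_le_one
          _ = Real.exp y := one_mul _
      calc ‖(1 : ℂ) - (Real.cos (θ b) : ℂ) * Complex.cos w‖
          ≤ ‖(1 : ℂ)‖ + ‖(Real.cos (θ b) : ℂ) * Complex.cos w‖ := norm_sub_le _ _
        _ ≤ 1 + Real.exp y := by rw [h1]; linarith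
        _ ≤ 2 * Real.exp y := by nlinarith [Real.one_le_exp (le_of_lt hy0)]
    -- sin lower bound
    have hsinb : Real.exp y / 4 ≤ ‖Complex.sin w‖ := by
      have h := norm_sin_ge_of_im w
      rw [hwim] at h
      have key : Real.exp (-y) ≤ Real.exp y / 2 := by
        rw [Real.exp_neg]
        rw [inv_le_iff_one_le_mul₀ (Real.exp_pos y)]
        have : (2:ℝ) ≤ Real.exp 1 * Real.exp 1 := by
          nlinarith [Real.add_one_le_exp 1]
        have h1 : Real.exp 1 ≤ Real.exp y := Real.exp_le_exp.mpr hy1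
        nlinarith [Real.exp_pos 1, Real.exp_pos y]
      linarith
    have hsinpos : 0 < ‖Complex.sin w‖ :=
      lt_of_lt_of_le (by positivity) hsinb
    have hsinsq : Real.exp y ^ 2 / 16 ≤ ‖Complex.sin w ^ 2‖ := by
      rw [norm_pow]
      calc Real.exp y ^ 2 / 16 = (Real.exp y / 4) ^ 2 := by ring
        _ ≤ ‖Complex.sin w‖ ^ 2 := by
            apply pow_le_pow_left₀ (by positivity) hsinb
    calc ‖(L b : ℂ) * (1 - (Real.cos (θ b) : ℂ) * Complex.cos w) / Complex.sin w ^ 2‖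
        = ‖(L b : ℂ)‖ * ‖(1 - (Real.cos (θ b) : ℂ) * Complex.cos w)‖ / ‖Complex.sin w ^ 2‖ := by
          rw [norm_div, norm_mul]
      _ ≤ L b * (2 * Real.exp y) / (Real.exp y ^ 2 / 16) := by
          apply div_le_div₀ (mul_nonneg (hL b).le (by positivity)) ?_ (by positivity) hsinsq
          have hLn : ‖((L b : ℝ) : ℂ)‖ = L b := by
            rw [Complex.norm_real]; exact abs_of_pos (hL b)
          rw [hLn]
          exact mul_le_mul_of_nonneg_left hnum (le_of_lt (hL b))
      _ = 32 * L b * Real.exp (-y) := by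
          rw [Real.exp_neg]
          field_simp
          ring
      _ ≤ 32 * L b * Real.exp (-c * u) := by
          apply mul_le_mul_of_nonneg_left _ (mul_nonneg (by norm_num) (hL b).le)
          apply Real.exp_le_exp.mpr
          have : c * u ≤ y := by
            calc c * u = m * Real.sin α * u := by rw [hc]
              _ ≤ L b * Real.sin α * u :=
                  mul_le_mul_of_nonneg_right
                    (mul_le_mul_of_nonneg_right (hmle b) hsinα.le) hu0.le
              _ = y := by rw [hy]; ring
          linarith
  -- combine
  calc ‖E * ∑ b, (L b : ℂ) * (1 - (Real.cos (θ b) : ℂ) *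
          Complex.cos ((u:ℂ) * L b * E)) / Complex.sin ((u:ℂ) * L b * E) ^ 2‖
      = ‖∑ b, (L b : ℂ) * (1 - (Real.cos (θ b) : ℂ) *
          Complex.cos ((u:ℂ) * L b * E)) / Complex.sin ((u:ℂ) * L b * E) ^ 2‖ := by
        rw [norm_mul, hEnorm, one_mul]
    _ ≤ ∑ b, ‖(L b : ℂ) * (1 - (Real.cos (θ b) : ℂ) *
          Complex.cos ((u:ℂ) * L b * E)) / Complex.sin ((u:ℂ) * L b * E) ^ 2‖ :=
        norm_sum_le _ _
    _ ≤ ∑ b, 32 * L b * Real.exp (-c * u) := Finset.sum_le_sum (fun b _ => hterm b)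
    _ = (∑ b, 32 * L b) * Real.exp (-c * u) := by rw [← Finset.sum_mul]
    _ ≤ (∑ b, 32 * L b) * ‖Real.exp (-c * u)‖ := by
        rw [Real.norm_eq_abs, abs_of_pos (Real.exp_pos _)]
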